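/- For integers n ≥ r ≥ 1 and l ≥ 1, the number of l-tuples (π₁,…,π_l) of set partitions of {1,…,n} into exactly k blocks, such that the elements 1,…,r lie in r distinct blocks in each π_i and all π_i have the same set of block minima, equals the (l,r)-Stirling number of the second kind S2(n,k) defined by the recurrence. -/

import Mathlib

/-- The `(l,r)`-Stirling numbers of the second kind. -/
def S2 (l r : ℕ) : ℕ → ℕ → ℕ
  | n, k =>
    if _h1 : n < r then 0
    else if _h2 : n = r then (if k = r then 1 else 0)
    else S2 l r (n - 1) (k - 1) + k ^ l * S2 l r (n - 1) k
termination_by n _ => n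
decreasing_by all_goals omega


open Finset

variable {n : ℕ}

/-- the min-of-block function of a partition of `Icc 1 n`, extended by `id`. -/
noncomputable def mf (n : ℕ) (P : Finpartition (Finset.Icc 1 n)) (x : ℕ) : ℕ :=
  if hx : x ∈ Finset.Icc 1 n then (P.part x).min' ⟨x, P.mem_part hx⟩ else x

lemma mf_of_not_mem (P : Finpartition (Finset.Icc 1 n)) {x : ℕ} (hx : x ∉ Finset.Icc 1 n) :
    mf n P x = x := by simp [mf, hx]

lemma mf_mem_part (P : Finpartition (Finset.Icc 1 n)) {x : ℕ} (hx : x ∈ Finset.Icc 1 n) :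
    mf n P x ∈ P.part x := by
  simp only [mf, hx, dif_pos]
  exact Finset.min'_mem _ _

lemma mf_le_of_mem_part (P : Finpartition (Finset.Icc 1 n)) {x y : ℕ}
    (hx : x ∈ Finset.Icc 1 n) (hy : y ∈ P.part x) : mf n P x ≤ y := by
  simp only [mf, hx, dif_pos]
  exact Finset.min'_le _ _ hy

lemma mf_mem (P : Finpartition (Finset.Icc 1 n)) {x : ℕ} (hx : x ∈ Finset.Icc 1 n) :
    mf n P x ∈ Finset.Icc 1 n :=
  P.le (P.part_mem.2 hx) (mf_mem_part P hx)

lemma mf_le (P : Finpartition (Finset.Icc 1 n)) (x : ℕ) : mf n P x ≤ x := by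
  by_cases hx : x ∈ Finset.Icc 1 n
  · exact mf_le_of_mem_part P hx (P.mem_part hx)
  · simp [mf, hx]

lemma part_eq_of_mf (P : Finpartition (Finset.Icc 1 n)) {x : ℕ} (hx : x ∈ Finset.Icc 1 n) :
    P.part (mf n P x) = P.part x :=
  P.part_eq_of_mem (P.part_mem.2 hx) (mf_mem_part P hx)

lemma mf_idem (P : Finpartition (Finset.Icc 1 n)) (x : ℕ) :
    mf n P (mf n P x) = mf n P x := by
  by_cases hx : x ∈ Finset.Icc 1 n
  · have hm := mf_mem P hx
    have h1 : mf n P (mf n P x) ∈ P.part x := by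
      rw [← part_eq_of_mf P hx]; exact mf_mem_part P hm
    have h2 := mf_le_of_mem_part P hm (by rw [part_eq_of_mf P hx]; exact mf_mem_part P hx)
    have h3 := mf_le_of_mem_part P hx h1
    omega
  · rw [mf_of_not_mem P hx, mf_of_not_mem P hx]

/-- `mf` values agree iff in same part -/
lemma mf_eq_iff (P : Finpartition (Finset.Icc 1 n)) {x a : ℕ}
    (hx : x ∈ Finset.Icc 1 n) (ha : a ∈ Finset.Icc 1 n) :
    mf n P x = mf n P a ↔ x ∈ P.part a := by
  constructor
  · intro h
    have h1 : mf n P a ∈ P.part x := h ▸ mf_mem_part P hx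
    have h2 : P.part x = P.part a :=
      P.eq_of_mem_parts (P.part_mem.2 hx) (P.part_mem.2 ha) h1 (mf_mem_part P ha)
    rw [← h2]; exact P.mem_part hx
  · intro h
    have h2 : P.part x = P.part a := P.part_eq_of_mem (P.part_mem.2 ha) h
    simp only [mf, hx, ha, dif_pos]
    congr 1

/-- constructing a partition from the fibers of a function -/
def mkP (n : ℕ) (f : ℕ → ℕ) : Finpartition (Finset.Icc 1 n) where
  parts := (Finset.Icc 1 n).image fun a => (Finset.Icc 1 n).filter fun x => f x = f a
  supIndep := by
    rw [Finset.supIndep_iff_pairwiseDisjoint]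
    rintro b1 hb1 b2 hb2 hne
    obtain ⟨a1, ha1, rfl⟩ := Finset.mem_image.1 (Finset.mem_coe.1 hb1)
    obtain ⟨a2, ha2, rfl⟩ := Finset.mem_image.1 (Finset.mem_coe.1 hb2)
    rw [Function.onFun, Finset.disjoint_left]
    intro x hx1 hx2
    simp only [id_eq, Finset.mem_filter] at hx1 hx2
    exact hne (by rw [← hx1.2, hx2.2])
  sup_parts := by
    apply le_antisymm
    · exact Finset.sup_le fun b hb => by
        obtain ⟨a, _, rfl⟩ := Finset.mem_image.1 hb
        exact Finset.filter_subset _ _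
    · intro x hx
      rw [Finset.mem_sup]
      exact ⟨_, Finset.mem_image_of_mem _ hx, by simp [hx]⟩
  bot_notMem := by
    simp only [Finset.bot_eq_empty, Finset.mem_image]
    rintro ⟨a, ha, h⟩
    have : a ∈ (Finset.Icc 1 n).filter fun x => f x = f a := by simp [ha]
    rw [h] at this
    exact absurd this (Finset.notMem_empty a)

lemma mkP_part (f : ℕ → ℕ) {a : ℕ} (ha : a ∈ Finset.Icc 1 n) :
    (mkP n f).part a = (Finset.Icc 1 n).filter fun x => f x = f a :=
  Finpartition.part_eq_of_mem _ (Finset.mem_image_of_mem _ ha) (by simp [ha])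

lemma mf_mkP {f : ℕ → ℕ} (hf1 : ∀ x ∈ Finset.Icc 1 n, f x ∈ Finset.Icc 1 n)
    (hf2 : ∀ x, f x ≤ x) (hf3 : ∀ x, f (f x) = f x)
    (hf4 : ∀ x ∉ Finset.Icc 1 n, f x = x) : mf n (mkP n f) = f := by
  funext x
  by_cases hx : x ∈ Finset.Icc 1 n
  · have hfx : f x ∈ (Finset.Icc 1 n).filter fun y => f y = f x := by
      simp [hf1 x hx, hf3 x]
    apply le_antisymm
    · have := mf_le_of_mem_part (mkP n f) hx (by rw [mkP_part f hx]; exact hfx)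
      exact this
    · have hm := mf_mem_part (mkP n f) hx
      rw [mkP_part f hx, Finset.mem_filter] at hm
      calc f x = f (mf n (mkP n f) x) := hm.2.symm
        _ ≤ mf n (mkP n f) x := hf2 _
  · rw [mf_of_not_mem _ hx, hf4 x hx]

lemma mkP_mf (P : Finpartition (Finset.Icc 1 n)) : mkP n (mf n P) = P := by
  ext1
  ext b
  simp only [mkP, Finset.mem_image]
  constructor
  · rintro ⟨a, ha, rfl⟩
    have : ((Finset.Icc 1 n).filter fun x => mf n P x = mf n P a) = P.part a := by
      ext x
      simp only [Finset.mem_filter]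
      constructor
      · rintro ⟨hx, h⟩; exact (mf_eq_iff P hx ha).1 h
      · intro h
        have hx : x ∈ Finset.Icc 1 n := P.le (P.part_mem.2 ha) h
        exact ⟨hx, (mf_eq_iff P hx ha).2 h⟩
    rw [this]; exact P.part_mem.2 ha
  · intro hb
    obtain ⟨a, hab⟩ := P.nonempty_of_mem_parts hb
    have ha : a ∈ Finset.Icc 1 n := P.le hb hab
    refine ⟨a, ha, ?_⟩
    have hba : b = P.part a := (P.part_eq_of_mem hb hab).symm
    rw [hba]
    ext x
    simp only [Finset.mem_filter]
    constructor
    · rintro ⟨hx, h⟩; exact (mf_eq_iff P hx ha).1 h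
    · intro h
      have hx : x ∈ Finset.Icc 1 n := P.le (P.part_mem.2 ha) h
      exact ⟨hx, (mf_eq_iff P hx ha).2 h⟩

lemma minima_image (P : Finpartition (Finset.Icc 1 n)) :
    P.parts.image Finset.min =
      ((Finset.Icc 1 n).image (mf n P)).image (WithTop.some : ℕ → WithTop ℕ) := by
  ext w
  simp only [Finset.mem_image]
  constructor
  · rintro ⟨b, hb, rfl⟩
    obtain ⟨a, hab⟩ := P.nonempty_of_mem_parts hb
    have ha : a ∈ Finset.Icc 1 n := P.le hb hab
    refine ⟨mf n P a, ⟨a, ha, rfl⟩, ?_⟩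
    have hba : P.part a = b := P.part_eq_of_mem hb hab
    rw [← hba]
    simp only [mf, ha, dif_pos]
    exact Finset.coe_min' _
  · rintro ⟨m, ⟨a, ha, rfl⟩, rfl⟩
    refine ⟨P.part a, P.part_mem.2 ha, ?_⟩
    simp only [mf, ha, dif_pos]
    exact (Finset.coe_min' _).symm

lemma card_parts_eq (P : Finpartition (Finset.Icc 1 n)) :
    P.parts.card = ((Finset.Icc 1 n).image (mf n P)).card := by
  have h1 : (P.parts.image Finset.min).card = P.parts.card := by
    apply Finset.card_image_of_injOn
    intro b1 hb1 b2 hb2 h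
    have hn1 := P.nonempty_of_mem_parts hb1
    have hn2 := P.nonempty_of_mem_parts hb2
    rw [← Finset.coe_min' hn1, ← Finset.coe_min' hn2] at h
    have h' : b1.min' hn1 = b2.min' hn2 := by exact_mod_cast h
    exact P.eq_of_mem_parts hb1 hb2 (h' ▸ Finset.min'_mem _ _) (Finset.min'_mem _ _)
  have h2 := minima_image P
  rw [← h1, h2]
  exact Finset.card_image_of_injective _ fun a b h => by exact_mod_cast h
structure Cond (l r n k : ℕ) (F : Fin l → ℕ → ℕ) : Prop where
  le : ∀ i x, F i x ≤ x
  maps : ∀ i, ∀ x ∈ Finset.Icc 1 n, F i x ∈ Finset.Icc 1 n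
  outside : ∀ i, ∀ x ∉ Finset.Icc 1 n, F i x = x
  idem : ∀ i x, F i (F i x) = F i x
  card_image : ∀ i, ((Finset.Icc 1 n).image (F i)).card = k
  image_eq : ∀ i j, (Finset.Icc 1 n).image (F i) = (Finset.Icc 1 n).image (F j)
  fix : ∀ i, ∀ j ∈ Finset.Icc 1 r, F i j = j

def E (l r n k : ℕ) : Type := {F : Fin l → ℕ → ℕ // Cond l r n k F}

/-- distinct blocks on `Icc 1 r` iff `mf` fixes `Icc 1 r`. -/
lemma distinct_iff (P : Finpartition (Finset.Icc 1 n)) (hrn : r ≤ n) :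
    (∀ j₁ ∈ Finset.Icc 1 r, ∀ j₂ ∈ Finset.Icc 1 r, j₁ ≠ j₂ →
        ∀ b ∈ P.parts, j₁ ∈ b → j₂ ∉ b) ↔ ∀ j ∈ Finset.Icc 1 r, mf n P j = j := by
  constructor
  · intro h j hj
    have hj' : j ∈ Finset.Icc 1 n := by
      rw [Finset.mem_Icc] at hj ⊢; omega
    have hm := mf_mem P hj'
    have hle := mf_le P j
    by_contra hne
    have hmr : mf n P j ∈ Finset.Icc 1 r := by
      rw [Finset.mem_Icc] at hj hm ⊢; omega
    exact h (mf n P j) hmr j hj hne (P.part j) (P.part_mem.2 hj')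
      (mf_mem_part P hj') (P.mem_part hj')
  · intro h j₁ hj₁ j₂ hj₂ hne b hb h₁ h₂
    have hj₁' : j₁ ∈ Finset.Icc 1 n := by rw [Finset.mem_Icc] at hj₁ ⊢; omega
    have hj₂' : j₂ ∈ Finset.Icc 1 n := by rw [Finset.mem_Icc] at hj₂ ⊢; omega
    have e1 : P.part j₁ = b := P.part_eq_of_mem hb h₁
    have e2 : P.part j₂ = b := P.part_eq_of_mem hb h₂
    have : mf n P j₁ = mf n P j₂ := (mf_eq_iff P hj₁' hj₂').2 (e2 ▸ h₁)
    rw [h j₁ hj₁, h j₂ hj₂] at this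
    exact hne this

variable {l r k : ℕ}

noncomputable def tupleEquivE (hrn : r ≤ n) :
    {p : Fin l → Finpartition (Finset.Icc 1 n) //
      (∀ i, (p i).parts.card = k) ∧
      (∀ i, ∀ j₁ ∈ Finset.Icc 1 r, ∀ j₂ ∈ Finset.Icc 1 r, j₁ ≠ j₂ →
        ∀ b ∈ (p i).parts, j₁ ∈ b → j₂ ∉ b) ∧
      (∀ i j : Fin l, (p i).parts.image Finset.min = (p j).parts.image Finset.min)} ≃
      E l r n k where
  toFun p := by
    refine ⟨fun i => mf n (p.1 i), ?_, ?_, ?_, ?_, ?_, ?_, ?_⟩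
    · exact fun i x => mf_le _ x
    · exact fun i x hx => mf_mem _ hx
    · exact fun i x hx => mf_of_not_mem _ hx
    · exact fun i x => mf_idem _ x
    · exact fun i => (card_parts_eq (p.1 i)).symm.trans (p.2.1 i)
    · intro i j
      have h := p.2.2.2 i j
      rw [minima_image, minima_image] at h
      exact Finset.image_injective (fun a b hab => by exact_mod_cast hab) h
    · exact fun i => (distinct_iff (p.1 i) hrn).1 (p.2.2.1 i)
  invFun F := by
    refine ⟨fun i => mkP n (F.1 i), ?_, ?_, ?_⟩
    · intro i
      rw [card_parts_eq, mf_mkP (F.2.maps i) (F.2.le i) (F.2.idem i) (F.2.outside i)]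
      exact F.2.card_image i
    · intro i
      rw [distinct_iff _ hrn, mf_mkP (F.2.maps i) (F.2.le i) (F.2.idem i) (F.2.outside i)]
      exact F.2.fix i
    · intro i j
      rw [minima_image, minima_image,
        mf_mkP (F.2.maps i) (F.2.le i) (F.2.idem i) (F.2.outside i),
        mf_mkP (F.2.maps j) (F.2.le j) (F.2.idem j) (F.2.outside j),
        F.2.image_eq i j]
  left_inv p := by
    apply Subtype.ext
    funext i
    exact mkP_mf (p.1 i)
  right_inv F := by
    apply Subtype.ext
    funext i
    exact mf_mkP (F.2.maps i) (F.2.le i) (F.2.idem i) (F.2.outside i)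

lemma mem_image_idem {f : ℕ → ℕ} (hmaps : ∀ x ∈ Finset.Icc 1 n, f x ∈ Finset.Icc 1 n)
    (hidem : ∀ x, f (f x) = f x) {m : ℕ} :
    m ∈ (Finset.Icc 1 n).image f ↔ m ∈ Finset.Icc 1 n ∧ f m = m := by
  rw [Finset.mem_image]
  constructor
  · rintro ⟨x, hx, rfl⟩
    exact ⟨hmaps x hx, hidem x⟩
  · rintro ⟨hm, h⟩
    exact ⟨m, hm, h⟩

instance instFiniteE : Finite (E l r n k) := by
  have : Function.Injective
      (fun F : E l r n k => fun (i : Fin l) (x : Finset.Icc 1 n) =>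
        (⟨F.1 i x.1, F.2.maps i x.1 x.2⟩ : Finset.Icc 1 n)) := by
    intro F G h
    apply Subtype.ext
    funext i x
    by_cases hx : x ∈ Finset.Icc 1 n
    · have := congrFun (congrFun h i) ⟨x, hx⟩
      exact congrArg Subtype.val this
    · rw [F.2.outside i x hx, G.2.outside i x hx]
  exact Finite.of_injective _ this

lemma card_E_base (hl : 1 ≤ l) (hr : 1 ≤ r) :
    Nat.card (E l r r k) = if k = r then 1 else 0 := by
  have key : ∀ F : E l r r k, F.1 = fun _ x => x := by
    intro F
    funext i x
    by_cases hx : x ∈ Finset.Icc 1 r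
    · exact F.2.fix i x hx
    · exact F.2.outside i x hx
  by_cases hk : k = r
  · rw [if_pos hk]
    rw [Nat.card_eq_one_iff_unique]
    refine ⟨⟨fun F G => Subtype.ext ((key F).trans (key G).symm)⟩, ?_⟩
    refine ⟨⟨fun _ x => x, ?_, ?_, ?_, ?_, ?_, ?_, ?_⟩⟩
    · exact fun _ x => le_refl x
    · exact fun _ x hx => hx
    · exact fun _ x _ => rfl
    · exact fun _ x => rfl
    · intro i
      rw [Finset.image_id', Nat.card_Icc]
      omega
    · exact fun _ _ => rfl
    · exact fun _ j _ => rfl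
  · rw [if_neg hk]
    have : IsEmpty (E l r r k) := by
      constructor
      intro F
      apply hk
      have h := F.2.card_image ⟨0, hl⟩
      rw [key F] at h
      rw [← h, Finset.image_id', Nat.card_Icc]
      omega
    exact Nat.card_of_isEmpty

section Step

variable (l r n k : ℕ)

/-- Case A: `n+1` is a fixed point (a block minimum, i.e. singleton `{n+1}`) in every `Fᵢ`. -/
noncomputable def equivA (hr : 1 ≤ r) (hrn : r ≤ n) :
    {F : E l r (n+1) k // ∀ i, F.1 i (n+1) = n+1} ≃ E l r n (k-1) where
  toFun F := by
    have himg : ∀ i, (Finset.Icc 1 n).image (F.1.1 i) =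
        ((Finset.Icc 1 (n+1)).image (F.1.1 i)).erase (n+1) := by
      intro i
      ext m
      rw [Finset.mem_erase, Finset.mem_image, Finset.mem_image]
      constructor
      · rintro ⟨x, hx, rfl⟩
        rw [Finset.mem_Icc] at hx
        have hle := F.1.2.le i x
        refine ⟨by omega, x, Finset.mem_Icc.2 (by omega), rfl⟩
      · rintro ⟨hm, x, hx, rfl⟩
        rw [Finset.mem_Icc] at hx
        have hxne : x ≠ n + 1 := by
          intro hc
          exact hm (by rw [hc, F.2 i])
        exact ⟨x, Finset.mem_Icc.2 (by omega), rfl⟩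
    refine ⟨F.1.1, ?_, ?_, ?_, F.1.2.idem, ?_, ?_, F.1.2.fix⟩
    · exact F.1.2.le
    · intro i x hx
      rw [Finset.mem_Icc] at hx ⊢
      have h1 := F.1.2.maps i x (Finset.mem_Icc.2 (by omega))
      have h2 := F.1.2.le i x
      rw [Finset.mem_Icc] at h1
      omega
    · intro i x hx
      rw [Finset.mem_Icc] at hx
      by_cases hx1 : x = n + 1
      · rw [hx1]; exact F.2 i
      · exact F.1.2.outside i x (by rw [Finset.mem_Icc]; omega)
    · intro i
      rw [himg i, Finset.card_erase_of_mem, F.1.2.card_image i]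
      rw [Finset.mem_image]
      exact ⟨n+1, Finset.mem_Icc.2 (by omega), F.2 i⟩
    · intro i j
      rw [himg i, himg j, F.1.2.image_eq i j]
  invFun G := by
    refine ⟨⟨fun i x => if x = n+1 then n+1 else G.1 i x, ?_, ?_, ?_, ?_, ?_, ?_, ?_⟩,
      fun i => if_pos rfl⟩
    · intro i x
      by_cases hx : x = n+1
      · rw [if_pos hx, hx]
      · rw [if_neg hx]; exact G.2.le i x
    · intro i x hx
      rw [Finset.mem_Icc] at hx
      by_cases hx1 : x = n+1
      · rw [if_pos hx1, Finset.mem_Icc]; omega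
      · rw [if_neg hx1]
        have := G.2.maps i x (Finset.mem_Icc.2 (by omega))
        rw [Finset.mem_Icc] at this ⊢
        omega
    · intro i x hx
      rw [Finset.mem_Icc] at hx
      have hx1 : x ≠ n+1 := by omega
      rw [if_neg hx1]
      exact G.2.outside i x (by rw [Finset.mem_Icc]; omega)
    · intro i x
      by_cases hx : x = n+1
      · simp [hx]
      · rw [if_neg hx]
        have hGx : G.1 i x ≠ n+1 := by
          by_cases hxs : x ∈ Finset.Icc 1 n
          · have := G.2.maps i x hxs
            rw [Finset.mem_Icc] at this
            omega
          · rw [G.2.outside i x hxs]; exact hx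
        rw [if_neg hGx]
        exact G.2.idem i x
    · intro i
      have himg : (Finset.Icc 1 (n+1)).image (fun x => if x = n+1 then n+1 else G.1 i x) =
          insert (n+1) ((Finset.Icc 1 n).image (G.1 i)) := by
        ext m
        rw [Finset.mem_insert, Finset.mem_image, Finset.mem_image]
        constructor
        · rintro ⟨x, hx, rfl⟩
          rw [Finset.mem_Icc] at hx
          by_cases hx1 : x = n+1
          · left; rw [if_pos hx1]
          · right
            exact ⟨x, Finset.mem_Icc.2 (by omega), (if_neg hx1).symm⟩
        · rintro (rfl | ⟨x, hx, rfl⟩)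
          · exact ⟨n+1, Finset.mem_Icc.2 (by omega), if_pos rfl⟩
          · rw [Finset.mem_Icc] at hx
            have hx1 : x ≠ n+1 := by omega
            exact ⟨x, Finset.mem_Icc.2 (by omega), by simp [hx1]⟩
      rw [himg, Finset.card_insert_of_notMem, G.2.card_image i]
      · have h1 : (1 : ℕ) ∈ (Finset.Icc 1 n).image (G.1 i) := by
          rw [Finset.mem_image]
          exact ⟨1, Finset.mem_Icc.2 (by omega),
            G.2.fix i 1 (Finset.mem_Icc.2 (by omega))⟩
        have h2 : 1 ≤ k - 1 := by
          rw [← G.2.card_image i]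
          exact Finset.card_pos.2 ⟨1, h1⟩
        omega
      · rw [Finset.mem_image]
        rintro ⟨x, hx, hc⟩
        have := G.2.maps i x hx
        rw [Finset.mem_Icc] at this
        omega
    · intro i j
      have key : ∀ i' : Fin l, (Finset.Icc 1 (n+1)).image
            (fun x => if x = n+1 then n+1 else G.1 i' x) =
          insert (n+1) ((Finset.Icc 1 n).image (G.1 i')) := by
        intro i'
        ext m
        rw [Finset.mem_insert, Finset.mem_image, Finset.mem_image]
        constructor
        · rintro ⟨x, hx, rfl⟩
          rw [Finset.mem_Icc] at hx
          by_cases hx1 : x = n+1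
          · left; rw [if_pos hx1]
          · right
            exact ⟨x, Finset.mem_Icc.2 (by omega), (if_neg hx1).symm⟩
        · rintro (rfl | ⟨x, hx, rfl⟩)
          · exact ⟨n+1, Finset.mem_Icc.2 (by omega), if_pos rfl⟩
          · rw [Finset.mem_Icc] at hx
            have hx1 : x ≠ n+1 := by omega
            exact ⟨x, Finset.mem_Icc.2 (by omega), by simp [hx1]⟩
      rw [key i, key j, G.2.image_eq i j]
    · intro i j hj
      rw [Finset.mem_Icc] at hj
      have hj1 : j ≠ n+1 := by omega
      rw [if_neg hj1]
      exact G.2.fix i j (Finset.mem_Icc.2 (by omega))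
  left_inv F := by
    apply Subtype.ext
    apply Subtype.ext
    funext i x
    show (if x = n+1 then n+1 else F.1.1 i x) = F.1.1 i x
    by_cases hx : x = n+1
    · rw [if_pos hx, hx, F.2 i]
    · rw [if_neg hx]
  right_inv G := by
    apply Subtype.ext
    funext i x
    show (if x = n+1 then n+1 else G.1 i x) = G.1 i x
    by_cases hx : x = n+1
    · rw [if_pos hx, hx, G.2.outside i (n+1) (by rw [Finset.mem_Icc]; omega)]
    · rw [if_neg hx]

end Step

section StepB

variable (l r n k : ℕ)

lemma sigmaE_ext {x y : Σ e : E l r n k, ∀ i : Fin l, {m // m ∈ (Finset.Icc 1 n).image (e.1 i)}}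
    (h1 : x.1.1 = y.1.1) (h2 : ∀ i, (x.2 i).1 = (y.2 i).1) : x = y := by
  obtain ⟨⟨f, cf⟩, g⟩ := x
  obtain ⟨⟨f', cf'⟩, g'⟩ := y
  dsimp at h1 h2
  subst h1
  have hcc : cf = cf' := rfl
  subst hcc
  exact congrArg (Sigma.mk _) (funext fun i => Subtype.ext (h2 i))

/-- Case B: `n+1` is not a block minimum in any `Fᵢ`. -/
noncomputable def equivB (hl : 1 ≤ l) (hr : 1 ≤ r) (hrn : r ≤ n) :
    {F : E l r (n+1) k // ¬∀ i, F.1 i (n+1) = n+1} ≃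
      (Σ e : E l r n k, ∀ i : Fin l, {m // m ∈ (Finset.Icc 1 n).image (e.1 i)}) where
  toFun F := by
    have hne : ∀ i, F.1.1 i (n+1) ≠ n+1 := by
      intro i hi
      apply F.2
      intro j
      have h1 : (n+1) ∈ (Finset.Icc 1 (n+1)).image (F.1.1 i) := by
        rw [Finset.mem_image]
        exact ⟨n+1, Finset.mem_Icc.2 (by omega), hi⟩
      rw [F.1.2.image_eq i j] at h1
      exact ((mem_image_idem (F.1.2.maps j) (F.1.2.idem j)).1 h1).2
    have hlt : ∀ i, F.1.1 i (n+1) ∈ Finset.Icc 1 n := by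
      intro i
      have h1 := F.1.2.maps i (n+1) (Finset.mem_Icc.2 (by omega))
      have := hne i
      rw [Finset.mem_Icc] at h1 ⊢
      omega
    have hFne : ∀ i x, F.1.1 i x ≠ n+1 := by
      intro i x hc
      by_cases hxs : x ∈ Finset.Icc 1 (n+1)
      · have h1 := F.1.2.idem i x
        rw [hc] at h1
        exact hne i h1
      · rw [F.1.2.outside i x hxs] at hc
        exact hxs (hc ▸ Finset.mem_Icc.2 (by omega))
    have himg : ∀ i, (Finset.Icc 1 n).image (fun x => if x = n+1 then n+1 else F.1.1 i x) =
        (Finset.Icc 1 (n+1)).image (F.1.1 i) := by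
      intro i
      ext m
      rw [Finset.mem_image, Finset.mem_image]
      constructor
      · rintro ⟨x, hx, rfl⟩
        rw [Finset.mem_Icc] at hx
        have hx1 : x ≠ n+1 := by omega
        rw [if_neg hx1]
        exact ⟨x, Finset.mem_Icc.2 (by omega), rfl⟩
      · rintro ⟨x, hx, rfl⟩
        rw [Finset.mem_Icc] at hx
        by_cases hx1 : x = n+1
        · have hx2 : F.1.1 i x ≠ n + 1 := by rw [hx1]; exact hne i
          refine ⟨F.1.1 i x, by rw [hx1]; exact hlt i, ?_⟩
          show (if F.1.1 i x = n+1 then n+1 else F.1.1 i (F.1.1 i x)) = F.1.1 i x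
          rw [if_neg hx2]
          exact F.1.2.idem i x
        · refine ⟨x, Finset.mem_Icc.2 (by omega), ?_⟩
          rw [if_neg hx1]
    refine ⟨⟨fun i x => if x = n+1 then n+1 else F.1.1 i x,
        ?_, ?_, ?_, ?_, ?_, ?_, ?_⟩, ?_⟩
    · intro i x
      by_cases hx : x = n+1
      · rw [if_pos hx, hx]
      · rw [if_neg hx]; exact F.1.2.le i x
    · intro i x hx
      rw [Finset.mem_Icc] at hx
      have hx1 : x ≠ n+1 := by omega
      rw [if_neg hx1]
      have h1 := F.1.2.maps i x (Finset.mem_Icc.2 (by omega))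
      have h2 := F.1.2.le i x
      rw [Finset.mem_Icc] at h1 ⊢
      omega
    · intro i x hx
      rw [Finset.mem_Icc] at hx
      by_cases hx1 : x = n+1
      · rw [if_pos hx1, hx1]
      · rw [if_neg hx1]
        exact F.1.2.outside i x (by rw [Finset.mem_Icc]; omega)
    · intro i x
      by_cases hx : x = n+1
      · simp [hx]
      · rw [if_neg hx, if_neg (hFne i x)]
        exact F.1.2.idem i x
    · intro i
      rw [himg i]
      exact F.1.2.card_image i
    · intro i j
      rw [himg i, himg j]
      exact F.1.2.image_eq i j
    · intro i j hj
      rw [Finset.mem_Icc] at hj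
      have hj1 : j ≠ n+1 := by omega
      rw [if_neg hj1]
      exact F.1.2.fix i j (Finset.mem_Icc.2 hj)
    · -- the data of the minima chosen for n+1
      intro i
      refine ⟨F.1.1 i (n+1), ?_⟩
      rw [Finset.mem_image]
      refine ⟨F.1.1 i (n+1), hlt i, ?_⟩
      show (if F.1.1 i (n+1) = n+1 then n+1 else F.1.1 i (F.1.1 i (n+1))) = F.1.1 i (n+1)
      rw [if_neg (hne i)]
      exact F.1.2.idem i (n+1)
  invFun eg := by
    obtain ⟨e, g⟩ := eg
    have hg : ∀ i, (g i).1 ∈ Finset.Icc 1 n ∧ e.1 i (g i).1 = (g i).1 := fun i =>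
      (mem_image_idem (e.2.maps i) (e.2.idem i)).1 (g i).2
    have himg : ∀ i, (Finset.Icc 1 (n+1)).image (fun x => if x = n+1 then (g i).1 else e.1 i x)
        = (Finset.Icc 1 n).image (e.1 i) := by
      intro i
      ext m
      rw [Finset.mem_image, Finset.mem_image]
      constructor
      · rintro ⟨x, hx, rfl⟩
        by_cases hx1 : x = n+1
        · rw [if_pos hx1]
          exact ⟨(g i).1, (hg i).1, (hg i).2⟩
        · rw [if_neg hx1]
          rw [Finset.mem_Icc] at hx
          exact ⟨x, Finset.mem_Icc.2 (by omega), rfl⟩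
      · rintro ⟨x, hx, rfl⟩
        rw [Finset.mem_Icc] at hx
        have hx1 : x ≠ n+1 := by omega
        exact ⟨x, Finset.mem_Icc.2 (by omega), by rw [if_neg hx1]⟩
    refine ⟨⟨fun i x => if x = n+1 then (g i).1 else e.1 i x,
        ?_, ?_, ?_, ?_, ?_, ?_, ?_⟩, ?_⟩
    · intro i x
      by_cases hx : x = n+1
      · rw [if_pos hx, hx]
        have := (hg i).1
        rw [Finset.mem_Icc] at this
        omega
      · rw [if_neg hx]; exact e.2.le i x
    · intro i x hx
      rw [Finset.mem_Icc] at hx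
      by_cases hx1 : x = n+1
      · rw [if_pos hx1]
        have := (hg i).1
        rw [Finset.mem_Icc] at this ⊢
        omega
      · rw [if_neg hx1]
        have := e.2.maps i x (Finset.mem_Icc.2 (by omega))
        rw [Finset.mem_Icc] at this ⊢
        omega
    · intro i x hx
      rw [Finset.mem_Icc] at hx
      have hx1 : x ≠ n+1 := by omega
      rw [if_neg hx1]
      exact e.2.outside i x (by rw [Finset.mem_Icc]; omega)
    · intro i x
      by_cases hx : x = n+1
      · rw [if_pos hx]
        have h1 : (g i).1 ≠ n+1 := by
          have := (hg i).1
          rw [Finset.mem_Icc] at this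
          omega
        rw [if_neg h1]
        exact (hg i).2
      · rw [if_neg hx]
        have h1 : e.1 i x ≠ n+1 := by
          by_cases hxs : x ∈ Finset.Icc 1 n
          · have := e.2.maps i x hxs
            rw [Finset.mem_Icc] at this
            omega
          · rw [e.2.outside i x hxs]; exact hx
        rw [if_neg h1]
        exact e.2.idem i x
    · intro i
      rw [himg i]
      exact e.2.card_image i
    · intro i j
      rw [himg i, himg j]
      exact e.2.image_eq i j
    · intro i j hj
      rw [Finset.mem_Icc] at hj
      have hj1 : j ≠ n+1 := by omega
      rw [if_neg hj1]
      exact e.2.fix i j (Finset.mem_Icc.2 (by omega))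
    · intro h
      have h3 := h ⟨0, hl⟩
      simp at h3
      have h2 := (hg ⟨0, hl⟩).1
      rw [Finset.mem_Icc] at h2
      omega
  left_inv F := by
    apply Subtype.ext
    apply Subtype.ext
    funext i x
    show (if x = n+1 then F.1.1 i (n+1) else if x = n+1 then n+1 else F.1.1 i x) = F.1.1 i x
    by_cases hx : x = n+1
    · rw [if_pos hx, hx]
    · rw [if_neg hx, if_neg hx]
  right_inv eg := by
    obtain ⟨e, g⟩ := eg
    apply sigmaE_ext
    · funext i x
      show (if x = n+1 then n+1 else if x = n+1 then (g i).1 else e.1 i x) = e.1 i x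
      by_cases hx : x = n+1
      · rw [if_pos hx, hx, e.2.outside i (n+1) (by rw [Finset.mem_Icc]; omega)]
      · rw [if_neg hx, if_neg hx]
    · intro i
      show (if (n+1 : ℕ) = n+1 then (g i).1 else e.1 i (n+1)) = (g i).1
      rw [if_pos rfl]

end StepB

lemma card_step {l r n k : ℕ} (hl : 1 ≤ l) (hr : 1 ≤ r) (hrn : r ≤ n) :
    Nat.card (E l r (n+1) k) = Nat.card (E l r n (k-1)) + k ^ l * Nat.card (E l r n k) := by
  classical
  have h0 : Nat.card (E l r (n+1) k) =
      Nat.card {F : E l r (n+1) k // ∀ i, F.1 i (n+1) = n+1} +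
      Nat.card {F : E l r (n+1) k // ¬∀ i, F.1 i (n+1) = n+1} := by
    rw [← Nat.card_sum]
    exact Nat.card_congr (Equiv.sumCompl _).symm
  rw [h0, Nat.card_congr (equivA l r n k hr hrn), Nat.card_congr (equivB l r n k hl hr hrn)]
  rw [Nat.card_congr ((Equiv.sigmaCongrRight fun e : E l r n k =>
    Equiv.piCongrRight fun i => (Finset.equivFin _).trans
      (finCongr (e.2.card_image i))).trans (Equiv.sigmaEquivProd _ _))]
  rw [Nat.card_prod, Nat.card_eq_fintype_card (α := Fin l → Fin k)]
  rw [Fintype.card_fun, Fintype.card_fin, Fintype.card_fin, mul_comm]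

lemma count_E {l r : ℕ} (hl : 1 ≤ l) (hr : 1 ≤ r) :
    ∀ n, r ≤ n → ∀ k, Nat.card (E l r n k) = S2 l r n k := by
  intro n hn
  induction n, hn using Nat.le_induction with
  | base =>
    intro k
    rw [card_E_base hl hr, S2]
    simp
  | succ n hn ih =>
    intro k
    have hS : S2 l r (n+1) k = S2 l r n (k-1) + k ^ l * S2 l r n k := by
      rw [S2, dif_neg (by omega), dif_neg (by omega), Nat.add_sub_cancel]
    rw [card_step hl hr hn, ih, ih, hS]

theorem stmt19 (l r n k : ℕ) (hr : 1 ≤ r) (hn : r ≤ n) (hl : 1 ≤ l) :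
    Nat.card {p : Fin l → Finpartition (Finset.Icc 1 n) //
      (∀ i, (p i).parts.card = k) ∧
      (∀ i, ∀ j₁ ∈ Finset.Icc 1 r, ∀ j₂ ∈ Finset.Icc 1 r, j₁ ≠ j₂ →
        ∀ b ∈ (p i).parts, j₁ ∈ b → j₂ ∉ b) ∧
      (∀ i j : Fin l, (p i).parts.image Finset.min = (p j).parts.image Finset.min)} =
      S2 l r n k := by
  rw [Nat.card_congr (tupleEquivE hn)]
  exact count_E hl hr n hn k
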